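/- For every nonempty set O of OR+ nodes of an ad-AND/OR graph G all having the same color, the graph G/O admits at least one solution subtree; consequently, for an e-colored G, the set of equivalence classes of G/O is nonempty. -/

import Mathlib

/-!
Framework: acyclic decomposable AND/OR graphs (ad-AND/OR graphs), solution
subtrees, e-colorings, the contraction `π`, equivalence classes, color tuples,
compatibility, and the order `≺` on node-colored rooted trees.
-/

/-- Finite node-colored rooted trees.  Children are stored as a list; the trees
representing equivalence classes are canonical: the children of every node are
sorted strictly increasingly by their root colors (which represents faithfully
an unordered tree whose children have pairwise distinct colors). -/
inductive CTree (C : Type u) : Type u where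
  | node : C → List (CTree C) → CTree C

namespace CTree

variable {C : Type*}

/-- The color of the root of a colored tree. -/
def rootColor : CTree C → C
  | node c _ => c

/-- The child subtrees of the root. -/
def children : CTree C → List (CTree C)
  | node _ ts => ts

/-- The tuple of colors of the children of the root (in stored order; for a
canonical tree this is the increasingly sorted tuple of the children colors). -/
def rootTuple (T : CTree C) : List C := T.children.map rootColor

/-- The order `≺` on (canonical) node-colored rooted trees: `T ≺ T'` if the root
color of `T` strictly precedes the one of `T'`; if the root colors are equal,
`T ≺ T'` if the tuple of child subtrees of the root of `T` (sorted with respect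
to `≺`, i.e. by root colors for canonical trees) is lexicographically smaller
than the corresponding tuple for `T'`, the empty tree being smaller than any
tree. -/
inductive Lt [LT C] : CTree C → CTree C → Prop where
  | color {c c' : C} {ts ts' : List (CTree C)} (h : c < c') :
      Lt (node c ts) (node c' ts')
  | children {c : C} {ts ts' : List (CTree C)} (h : List.Lex Lt ts ts') :
      Lt (node c ts) (node c ts')

/-- Canonical trees: at every node, the children are sorted strictly
increasingly with respect to their root colors (in particular the children of
every node have pairwise distinct colors). -/
inductive Canonical [LT C] : CTree C → Prop where
  | node {c : C} {ts : List (CTree C)}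
      (hsorted : ts.Chain' fun a b => a.rootColor < b.rootColor)
      (hrec : ∀ t ∈ ts, Canonical t) : Canonical (node c ts)

end CTree

/-- An acyclic decomposable AND/OR graph (ad-AND/OR graph) on a finite vertex
type `V`: the vertices are partitioned into AND nodes and OR⁺ nodes, the graph
is acyclic, every arc joins an AND node and an OR⁺ node, every AND node has
in-degree and out-degree at least one, and the graph is decomposable. -/
structure AndOrGraph (V : Type*) [Fintype V] : Type _ where
  /-- the arcs of the graph -/
  Adj : V → V → Prop
  /-- the AND nodes; the remaining nodes are the OR⁺ nodes -/
  IsAnd : V → Prop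
  /-- the graph is acyclic -/
  acyclic : ∀ v, ¬ Relation.TransGen Adj v v
  /-- every arc joins an AND node and an OR⁺ node (in either direction) -/
  bipartite : ∀ u v, Adj u v → (IsAnd u ↔ ¬ IsAnd v)
  /-- every AND node has in-degree at least one -/
  and_in : ∀ v, IsAnd v → ∃ u, Adj u v
  /-- every AND node has out-degree at least one -/
  and_out : ∀ v, IsAnd v → ∃ u, Adj v u
  /-- decomposability: the sets of nodes reachable from distinct out-neighbors
  of an AND node are pairwise disjoint -/
  decomposable : ∀ x u v, IsAnd x → Adj x u → Adj x v → u ≠ v →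
    ∀ w, Relation.ReflTransGen Adj u w → Relation.ReflTransGen Adj v w → False

namespace AndOrGraph

variable {V : Type*} [Fintype V] {C : Type*} [LinearOrder C]

/-- A goal node: a node of out-degree zero. -/
def IsGoal (G : AndOrGraph V) (v : V) : Prop := ∀ u, ¬ G.Adj v u

/-- A start node of `G`: an OR⁺ node of in-degree zero. -/
def IsStart (G : AndOrGraph V) (v : V) : Prop := ¬ G.IsAnd v ∧ ∀ u, ¬ G.Adj u v

/-- `G.IsSolutionSubtree O verts root`: the subgraph of `G` induced by the
vertex set `verts` is a solution subtree of `G/O` (the elements of `O` being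
regarded as the start nodes) with root `root`: it contains exactly one start
node `root`, every node of it is reachable from `root` within it, every OR node
of it (non-goal OR⁺ node) has exactly one of its `G`-out-neighbors in it and
every AND node of it has all of its `G`-out-neighbors in it. -/
structure IsSolutionSubtree (G : AndOrGraph V) (O : Set V) (verts : Set V)
    (root : V) : Prop where
  root_start : root ∈ O
  root_mem : root ∈ verts
  unique_start : ∀ v ∈ verts, v ∈ O → v = root
  reach : ∀ v ∈ verts,
    Relation.ReflTransGen (fun a b => G.Adj a b ∧ a ∈ verts ∧ b ∈ verts) root v
  or_choice : ∀ v ∈ verts, ¬ G.IsAnd v → ¬ G.IsGoal v → ∃! u, u ∈ verts ∧ G.Adj v u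
  and_all : ∀ v ∈ verts, G.IsAnd v → ∀ u, G.Adj v u → u ∈ verts

/-- An e-coloring of `G`: a coloring of the (OR⁺) nodes such that the
out-neighbors of every AND node have pairwise distinct colors. -/
def EColoring (G : AndOrGraph V) (col : V → C) : Prop :=
  ∀ x u u', G.IsAnd x → G.Adj x u → G.Adj x u' → col u = col u' → u = u'

/-- `PiAssign G col verts f`: the function `f` assigns to every OR⁺ node `v`
of the (solution sub)tree with vertex set `verts` the contraction `π` of the
subtree rooted at `v`: a leaf of the subtree is sent to a single node of its
color, and an OR node is joined directly to the children of its AND-child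
(the AND nodes are contracted), the child subtrees being listed sorted by
their root colors. -/
def PiAssign (G : AndOrGraph V) (col : V → C) (verts : Set V)
    (f : V → CTree C) : Prop :=
  ∀ v ∈ verts, ¬ G.IsAnd v →
    ((∀ u ∈ verts, ¬ G.Adj v u) → f v = CTree.node (col v) []) ∧
    (∀ x ∈ verts, G.Adj v x → G.IsAnd x →
      ∃ ts : List (CTree C),
        f v = CTree.node (col v) ts ∧
        (∀ u, G.Adj x u → f u ∈ ts) ∧
        (∀ t ∈ ts, ∃ u, G.Adj x u ∧ f u = t) ∧
        ts.Chain' fun a b => a.rootColor < b.rootColor)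

/-- `PiAt G col verts v T`: the contraction `π` of the (solution sub)tree with
vertex set `verts` rooted at the OR⁺ node `v` is the colored tree `T`. -/
def PiAt (G : AndOrGraph V) (col : V → C) (verts : Set V) (v : V)
    (T : CTree C) : Prop :=
  ∃ f, PiAssign G col verts f ∧ v ∈ verts ∧ f v = T

/-- `T` is an equivalence class of `G/O`: `T = π(T₁)` for some solution subtree
`T₁` of `G/O`. -/
def IsClass (G : AndOrGraph V) (col : V → C) (O : Set V) (T : CTree C) : Prop :=
  ∃ verts root, G.IsSolutionSubtree O verts root ∧ PiAt G col verts root T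

/-- `r(π⁻¹(T))`: the set of roots of the solution subtrees of `G/O` belonging
to the equivalence class `T`. -/
def classRoots (G : AndOrGraph V) (col : V → C) (O : Set V) (T : CTree C) :
    Set V :=
  {o | ∃ verts, G.IsSolutionSubtree O verts o ∧ PiAt G col verts o T}

/-- `IsColorTuple G col x t`: `t = C~(x)`, the tuple of the colors of the
out-neighbors of `x` sorted in increasing order. -/
def IsColorTuple (G : AndOrGraph V) (col : V → C) (x : V) (t : List C) : Prop :=
  t.Chain' (· < ·) ∧ ∀ ci, ci ∈ t ↔ ∃ u, G.Adj x u ∧ col u = ci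

/-- `t ∈ 𝒯(O)`: `t = C~(x)` for some AND out-neighbor `x` of a node of `O`. -/
def TupleOf (G : AndOrGraph V) (col : V → C) (O : Set V) (t : List C) : Prop :=
  ∃ o ∈ O, ∃ x, G.Adj o x ∧ G.IsAnd x ∧ IsColorTuple G col x t

/-- `Chʳ(O)`: the set of AND out-neighbors of `O` whose color tuple is `t`. -/
def ChTup (G : AndOrGraph V) (col : V → C) (O : Set V) (t : List C) : Set V :=
  {x | G.IsAnd x ∧ (∃ o ∈ O, G.Adj o x) ∧ IsColorTuple G col x t}

/-- `Cʳᵢ` (for `ci` the `i`-th color of the tuple `t = tᵣ`): the set of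
out-neighbors of color `ci` of the AND nodes of `Chʳ(O)`. -/
def grandChildren (G : AndOrGraph V) (col : V → C) (O : Set V) (t : List C)
    (ci : C) : Set V :=
  {u | ∃ x ∈ ChTup G col O t, G.Adj x u ∧ col u = ci}

/-- A node `o` is compatible with the trees `Ts = (T₁, …, T_k)` (with respect to
`O` and the color tuple `t = tᵣ = (c₁, …, c_j)`, `k ≤ j`): some AND node
`x ∈ Chʳ(O)` has `o` as an out-neighbor and, for every `i ≤ k`, has an
out-neighbor that is the root of a solution subtree of `G/Cʳᵢ` of class `Tᵢ`. -/
def Compatible (G : AndOrGraph V) (col : V → C) (O : Set V) (t : List C)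
    (Ts : List (CTree C)) (o : V) : Prop :=
  ∃ x ∈ ChTup G col O t, G.Adj x o ∧
    ∀ p ∈ Ts.zip t, ∃ u, G.Adj x u ∧
      u ∈ classRoots G col (grandChildren G col O t p.2) p.1

/-- `𝒪ᵢ ⊆ Cʳᵢ`: the set of nodes of `Cʳᵢ` (for `ci` the `i`-th color of `t`)
that are compatible with the trees `Ts = (T₁, …, T_{i-1})`. -/
def compatSet (G : AndOrGraph V) (col : V → C) (O : Set V) (t : List C)
    (Ts : List (CTree C)) (ci : C) : Set V :=
  {o | o ∈ grandChildren G col O t ci ∧ Compatible G col O t Ts o}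

end AndOrGraph

variable {V : Type*} [Fintype V] {C : Type*} [LinearOrder C]

open AndOrGraph CTree


section Aux

open Relation

lemma wfAux (G : AndOrGraph V) :
    WellFounded (fun a b : V => Relation.TransGen G.Adj b a) := by
  haveI : IsTrans V (fun a b : V => Relation.TransGen G.Adj b a) :=
    ⟨fun a b c h1 h2 => h2.trans h1⟩
  haveI : IsIrrefl V (fun a b : V => Relation.TransGen G.Adj b a) :=
    ⟨fun a => G.acyclic a⟩
  exact Finite.wellFounded_of_trans_of_irrefl _

/-- A "good" set: a solution subtree rooted at `v`, except that we do not yet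
care about start nodes. -/
def GoodSet (G : AndOrGraph V) (v : V) (verts : Set V) : Prop :=
  v ∈ verts ∧
  (∀ w ∈ verts, Relation.ReflTransGen G.Adj v w) ∧
  (∀ w ∈ verts,
    Relation.ReflTransGen (fun a b => G.Adj a b ∧ a ∈ verts ∧ b ∈ verts) v w) ∧
  (∀ z ∈ verts, ¬ G.IsAnd z → ¬ G.IsGoal z → ∃! u, u ∈ verts ∧ G.Adj z u) ∧
  (∀ z ∈ verts, G.IsAnd z → ∀ u, G.Adj z u → u ∈ verts)

lemma restrict_mono {r : V → V → Prop} {s t : Set V} (hst : s ⊆ t) {a b : V}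
    (h : Relation.ReflTransGen (fun a b => r a b ∧ a ∈ s ∧ b ∈ s) a b) :
    Relation.ReflTransGen (fun a b => r a b ∧ a ∈ t ∧ b ∈ t) a b :=
  Relation.ReflTransGen.mono (fun _ _ hab => ⟨hab.1, hst hab.2.1, hst hab.2.2⟩) _ _ h

lemma goodSet_exists (G : AndOrGraph V) :
    ∀ v, ¬ G.IsAnd v → ∃ verts, GoodSet G v verts := by
  intro v
  induction v using (wfAux G).induction with
  | _ v IH =>
  intro hv
  by_cases hg : G.IsGoal v
  · refine ⟨{v}, rfl, ?_, ?_, ?_, ?_⟩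
    · rintro w rfl; exact .refl
    · rintro w rfl; exact .refl
    · rintro z rfl _ hzg; exact absurd hg hzg
    · rintro z rfl hza; exact absurd hza hv
  · have hne : ∃ u, G.Adj v u := by
      by_contra h
      push_neg at h
      exact hg h
    obtain ⟨x, hxN, hxmin⟩ := (wfAux G).has_min {u | G.Adj v u} hne
    have hxAnd : G.IsAnd x := by
      have := G.bipartite v x hxN; tauto
    have hch : ∀ w, G.Adj x w → ∃ verts, GoodSet G w verts := by
      intro w hw
      refine IH w (Relation.TransGen.head hxN (.single hw)) ?_
      have := G.bipartite x w hw; tauto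
    choose! F hF using hch
    classical
    refine ⟨{v, x} ∪ ⋃ w, ⋃ (_ : G.Adj x w), F w, ?_⟩
    set verts : Set V := {v, x} ∪ ⋃ w, ⋃ (_ : G.Adj x w), F w with hverts
    have hmem : ∀ z, z ∈ verts ↔ z = v ∨ z = x ∨ ∃ w, G.Adj x w ∧ z ∈ F w := by
      intro z
      simp only [hverts, Set.mem_iUnion, Set.mem_union, Set.mem_insert_iff]
      tauto
    have hvmem : v ∈ verts := (hmem v).2 (Or.inl rfl)
    have hxmem : x ∈ verts := (hmem x).2 (Or.inr (Or.inl rfl))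
    have hFsub : ∀ w, G.Adj x w → F w ⊆ verts := by
      intro w hw z hz
      exact (hmem z).2 (Or.inr (Or.inr ⟨w, hw, hz⟩))
    have hreachF : ∀ w, G.Adj x w → ∀ z ∈ F w, Relation.ReflTransGen G.Adj w z :=
      fun w hw => (hF w hw).2.1
    -- transitive reach from x to anything in some F w
    have hxreach : ∀ w, G.Adj x w → ∀ z ∈ F w, Relation.TransGen G.Adj x z := by
      intro w hw z hz
      exact Relation.TransGen.head' hw (hreachF w hw z hz)
    have hvreach : ∀ w, G.Adj x w → ∀ z ∈ F w, Relation.TransGen G.Adj v z :=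
      fun w hw z hz => Relation.TransGen.head hxN (hxreach w hw z hz)
    refine ⟨hvmem, ?_, ?_, ?_, ?_⟩
    · -- global reach
      intro w hw
      rcases (hmem w).1 hw with rfl | rfl | ⟨w', hw', hwF⟩
      · exact .refl
      · exact .single hxN
      · exact (hvreach w' hw' w hwF).to_reflTransGen
    · -- restricted reach
      intro w hw
      rcases (hmem w).1 hw with rfl | rfl | ⟨w', hw', hwF⟩
      · exact .refl
      · exact .single ⟨hxN, hvmem, hxmem⟩
      · have h1 : Relation.ReflTransGen
            (fun a b => G.Adj a b ∧ a ∈ verts ∧ b ∈ verts) w' w :=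
          restrict_mono (hFsub w' hw') ((hF w' hw').2.2.1 w hwF)
        have h2 : Relation.ReflTransGen
            (fun a b => G.Adj a b ∧ a ∈ verts ∧ b ∈ verts) v w' :=
          (Relation.ReflTransGen.single ⟨hxN, hvmem, hxmem⟩).tail
            ⟨hw', hxmem, hFsub w' hw' (hF w' hw').1⟩
        exact h2.trans h1
    · -- or_choice
      intro z hz hzAnd hzg
      rcases (hmem z).1 hz with rfl | rfl | ⟨w, hw, hzF⟩
      · refine ⟨x, ⟨hxmem, hxN⟩, ?_⟩
        rintro u ⟨hu, hAdj⟩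
        rcases (hmem u).1 hu with rfl | rfl | ⟨w', hw', huF⟩
        · exact absurd (Relation.TransGen.single hAdj) (G.acyclic _)
        · rfl
        · exact absurd (hxreach w' hw' u huF) (hxmin u hAdj)
      · exact absurd hxAnd hzAnd
      · obtain ⟨u₀, ⟨hu₀F, hu₀adj⟩, huniq⟩ :=
          (hF w hw).2.2.2.1 z hzF hzAnd hzg
        refine ⟨u₀, ⟨hFsub w hw hu₀F, hu₀adj⟩, ?_⟩
        rintro u ⟨hu, hAdj⟩
        rcases (hmem u).1 hu with rfl | rfl | ⟨w', hw', huF⟩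
        · exact absurd ((hvreach w hw z hzF).tail hAdj) (G.acyclic u)
        · exact absurd ((hxreach w hw z hzF).tail hAdj) (G.acyclic u)
        · by_cases hww : w' = w
          · subst hww
            exact huniq u ⟨huF, hAdj⟩
          · exact absurd ((hreachF w hw z hzF).tail hAdj)
              (fun hr => G.decomposable x w w' hxAnd hw hw'
                (Ne.symm hww) u hr (hreachF w' hw' u huF))
    · -- and_all
      intro z hz hzAnd u hAdj
      rcases (hmem z).1 hz with rfl | rfl | ⟨w, hw, hzF⟩
      · exact absurd hzAnd hv
      · exact hFsub u hAdj (hF u hAdj).1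
      · exact hFsub w hw ((hF w hw).2.2.2.2 z hzF hzAnd u hAdj)

lemma reflTransGen_self_restrict {r : V → V → Prop} {o : V} :
    ∀ {w}, Relation.ReflTransGen r o w →
      Relation.ReflTransGen
        (fun a b => r a b ∧ Relation.ReflTransGen r o a ∧ Relation.ReflTransGen r o b)
        o w := by
  intro w h
  induction h with
  | refl => exact .refl
  | tail hab hbc ih => exact ih.tail ⟨hbc, hab, hab.tail hbc⟩

lemma sol_exists (G : AndOrGraph V) (O : Set V) (hO : O.Nonempty)
    (hOr : ∀ o ∈ O, ¬ G.IsAnd o) :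
    ∃ verts root, G.IsSolutionSubtree O verts root := by
  obtain ⟨o, ho⟩ := hO
  obtain ⟨verts, hgood⟩ := goodSet_exists G o (hOr o ho)
  obtain ⟨hmem, hreach, hrreach, hor, hand⟩ := hgood
  obtain ⟨o', ⟨ho'v, ho'O⟩, ho'min⟩ :=
    (wfAux G).has_min (verts ∩ O) ⟨o, hmem, ho⟩
  set r : V → V → Prop := fun a b => G.Adj a b ∧ a ∈ verts ∧ b ∈ verts with hr
  set S : Set V := {z | Relation.ReflTransGen r o' z} with hS
  have hSsub : S ⊆ verts := by
    intro z hz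
    rcases Relation.reflTransGen_iff_eq_or_transGen.1 hz with rfl | ht
    · exact ho'v
    · obtain ⟨b, -, hb⟩ := Relation.TransGen.tail'_iff.1 ht
      exact hb.2.2
  have hSadj : ∀ a ∈ S, ∀ b, G.Adj a b → b ∈ verts → b ∈ S := by
    intro a ha b hab hb
    exact Relation.ReflTransGen.tail ha ⟨hab, hSsub ha, hb⟩
  refine ⟨S, o', ho'O, Relation.ReflTransGen.refl, ?_, ?_, ?_, ?_⟩
  · -- unique_start
    intro w hw hwO
    by_contra hne
    have hreach' : Relation.ReflTransGen G.Adj o' w :=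
      Relation.ReflTransGen.mono (fun _ _ h => h.1) _ _ (hw : Relation.ReflTransGen r o' w)
    rcases Relation.reflTransGen_iff_eq_or_transGen.1 hreach' with rfl | ht
    · exact hne rfl
    · exact ho'min w ⟨hSsub hw, hwO⟩ ht
  · -- reach
    intro w hw
    have := reflTransGen_self_restrict (r := r) (o := o') hw
    exact Relation.ReflTransGen.mono (fun a b h => ⟨h.1.1, h.2.1, h.2.2⟩) _ _ this
  · -- or_choice
    intro z hz hzAnd hzg
    obtain ⟨u, ⟨huv, huadj⟩, huniq⟩ := hor z (hSsub hz) hzAnd hzg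
    exact ⟨u, ⟨hSadj z hz u huadj huv, huadj⟩,
      fun u' ⟨hu', hadj'⟩ => huniq u' ⟨hSsub hu', hadj'⟩⟩
  · -- and_all
    intro z hz hzAnd u hAdj
    exact hSadj z hz u hAdj (hand z (hSsub hz) hzAnd u hAdj)

open Classical in
/-- The contraction `π` of the subtree of `verts` rooted at each node, defined
by well-founded recursion along the arcs. -/
noncomputable def piFun (G : AndOrGraph V) (col : V → C) (verts : Set V) :
    V → CTree C :=
  (wfAux G).fix fun v rec =>
    CTree.node (col v)
      (if h : v ∈ verts ∧ ¬ G.IsAnd v ∧ ∃ x, x ∈ verts ∧ G.Adj v x ∧ G.IsAnd x then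
        List.insertionSort (fun a b => CTree.rootColor a ≤ CTree.rootColor b)
          (((Finset.univ.filter fun u => G.Adj h.2.2.choose u).toList).map
            (fun u => if h' : Relation.TransGen G.Adj v u then rec u h'
              else CTree.node (col u) []))
      else [])

open Classical in
lemma piFun_eq (G : AndOrGraph V) (col : V → C) (verts : Set V) (v : V) :
    piFun G col verts v =
      CTree.node (col v)
        (if h : v ∈ verts ∧ ¬ G.IsAnd v ∧ ∃ x, x ∈ verts ∧ G.Adj v x ∧ G.IsAnd x then
          List.insertionSort (fun a b => CTree.rootColor a ≤ CTree.rootColor b)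
            (((Finset.univ.filter fun u => G.Adj h.2.2.choose u).toList).map
              (fun u => if Relation.TransGen G.Adj v u then piFun G col verts u
                else CTree.node (col u) []))
        else []) := by
  rw [piFun, WellFounded.fix_eq]
  rfl

lemma piFun_rootColor (G : AndOrGraph V) (col : V → C) (verts : Set V) (v : V) :
    (piFun G col verts v).rootColor = col v := by
  rw [piFun_eq]; rfl

open Classical in
lemma piFun_spec (G : AndOrGraph V) (col : V → C) {O verts : Set V} {root : V}
    (hsub : G.IsSolutionSubtree O verts root) (hcol : G.EColoring col) :
    PiAssign G col verts (piFun G col verts) := by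
  intro v hv hAnd
  constructor
  · intro hng
    rw [piFun_eq, dif_neg]
    rintro ⟨-, -, x, hx1, hx2, -⟩
    exact hng x hx1 hx2
  · intro x hx hvx hxAnd
    have hcond : v ∈ verts ∧ ¬ G.IsAnd v ∧ ∃ x', x' ∈ verts ∧ G.Adj v x' ∧ G.IsAnd x' :=
      ⟨hv, hAnd, x, hx, hvx, hxAnd⟩
    have hgoal : ¬ G.IsGoal v := fun h => h x hvx
    obtain ⟨u₀, hu₀, huniq⟩ := hsub.or_choice v hv hAnd hgoal
    have hxeq : hcond.2.2.choose = x := by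
      have h1 := hcond.2.2.choose_spec
      rw [huniq _ ⟨h1.1, h1.2.1⟩, huniq x ⟨hx, hvx⟩]
    rw [piFun_eq, dif_pos hcond, hxeq]
    set r : CTree C → CTree C → Prop :=
      fun a b => CTree.rootColor a ≤ CTree.rootColor b with hrdef
    haveI : IsTotal (CTree C) r := ⟨fun a b => le_total _ _⟩
    haveI : IsTrans (CTree C) r := ⟨fun a b c h1 h2 => le_trans h1 h2⟩
    set l : List V := (Finset.univ.filter fun u => G.Adj x u).toList with hl
    have hmeml : ∀ u, u ∈ l ↔ G.Adj x u := by
      intro u; simp [hl]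
    set Fr : V → CTree C := fun u =>
      if Relation.TransGen G.Adj v u then piFun G col verts u
      else CTree.node (col u) [] with hFr
    have hFreq : ∀ u, G.Adj x u → Fr u = piFun G col verts u := by
      intro u hu
      simp only [hFr]
      rw [if_pos (Relation.TransGen.head hvx (.single hu))]
    set ts : List (CTree C) := List.insertionSort r (l.map Fr) with hts
    have hperm : ts.Perm (l.map Fr) := List.perm_insertionSort r _
    refine ⟨ts, rfl, ?_, ?_, ?_⟩
    · intro u hu
      rw [hperm.mem_iff, ← hFreq u hu]
      exact List.mem_map_of_mem (f := Fr) ((hmeml u).2 hu)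
    · intro t ht
      obtain ⟨u, hul, hut⟩ := List.mem_map.1 (hperm.subset ht)
      exact ⟨u, (hmeml u).1 hul, by rw [← hFreq u ((hmeml u).1 hul), hut]⟩
    · -- sortedness
      have hsorted : List.Pairwise r ts := List.pairwise_insertionSort r _
      have hRC : ∀ u ∈ l, (Fr u).rootColor = col u := by
        intro u hu
        rw [hFreq u ((hmeml u).1 hu), piFun_rootColor]
      have hmapeq : (l.map Fr).map CTree.rootColor = l.map col := by
        rw [List.map_map]
        exact List.map_congr_left fun u hu => hRC u hu
      have hndl : (l.map col).Nodup := by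
        refine List.Nodup.map_on ?_ (Finset.nodup_toList _)
        intro u hu u' hu' hcc
        exact hcol x u u' hxAnd ((hmeml u).1 hu) ((hmeml u').1 hu') hcc
      have hnd : (ts.map CTree.rootColor).Nodup := by
        rw [(hperm.map CTree.rootColor).nodup_iff, hmapeq]
        exact hndl
      have hne : List.Pairwise (fun a b : CTree C =>
          CTree.rootColor a ≠ CTree.rootColor b) ts :=
        List.pairwise_map.1 hnd
      refine List.Pairwise.isChain ?_
      exact (hsorted.and hne).imp fun h => lt_of_le_of_ne h.1 h.2

end Aux

/-- For every nonempty set `O` of OR⁺ nodes of an ad-AND/OR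
graph `G`, all having the same color `c`, the graph `G/O` admits at least one
solution subtree; consequently, for an e-colored `G`, the set of equivalence
classes of `G/O` is nonempty. -/
theorem statement2 (G : AndOrGraph V) (col : V → C) (O : Set V) (c : C)
    (hO : O.Nonempty) (hOr : ∀ o ∈ O, ¬ G.IsAnd o) (hc : ∀ o ∈ O, col o = c) :
    (∃ verts root, G.IsSolutionSubtree O verts root) ∧
    (G.EColoring col → ∃ T : CTree C, G.IsClass col O T) := by
  obtain ⟨verts, root, hsub⟩ := sol_exists G O hO hOr
  refine ⟨⟨verts, root, hsub⟩, fun hecol => ?_⟩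
  exact ⟨piFun G col verts root, verts, root, hsub,
    piFun G col verts, piFun_spec G col hsub hecol, hsub.root_mem, rfl⟩
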